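/- Let X be a nonempty finite set, T : X → X a bijection such that the cyclic group generated by T acts transitively on X, ν : X → X a fixed-point-free involution commuting with T, and P ⊆ X a subset such that ν(P) equals the complement X \ P. Then the set {x ∈ X : x ∈ P and T(x) ∉ P} has odd cardinality. -/

import Mathlib

/-- Let `X` be a nonempty finite set, `T` a permutation of `X` whose powers act
transitively on `X`, `ν` a fixed-point-free involution commuting with `T`, and
`P ⊆ X` with `ν '' P = Pᶜ`. Then the set of `x ∈ P` with `T x ∉ P` has odd
cardinality. -/
theorem symmetric_orbit_odd_transitions {X : Type*} [Fintype X] [Nonempty X]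
    (T : Equiv.Perm X)
    (htrans : ∀ x y : X, ∃ n : ℤ, (T ^ n) x = y)
    (ν : X → X)
    (hν_inv : Function.Involutive ν) (hν_fp : ∀ x, ν x ≠ x)
    (hcomm : ∀ x, ν (T x) = T (ν x))
    (P : Set X) (hP : ν '' P = Pᶜ) :
    Odd (Set.ncard {x | x ∈ P ∧ T x ∉ P}) := by
  classical
  obtain ⟨x0⟩ := (inferInstance : Nonempty X)
  set n := Fintype.card X with hn
  set g : ℕ → X := fun k => (⇑T)^[k] x0 with hg
  -- surjectivity via natural powers
  have hsurjℕ : ∀ x : X, ∃ k : ℕ, g k = x := by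
    intro x
    obtain ⟨z, hz⟩ := htrans x0 x
    have h1 : T ^ z = T ^ (z % (orderOf T : ℤ)) :=
      zpow_eq_zpow_emod' z (pow_orderOf_eq_one T)
    have hnn : 0 ≤ z % (orderOf T : ℤ) :=
      Int.emod_nonneg z (by exact_mod_cast (orderOf_pos T).ne')
    refine ⟨(z % (orderOf T : ℤ)).toNat, ?_⟩
    have h2 : (T ^ ((z % (orderOf T : ℤ)).toNat)) x0 = x := by
      rw [← zpow_natCast, Int.toNat_of_nonneg hnn, ← h1, hz]
    show (⇑T)^[(z % (orderOf T : ℤ)).toNat] x0 = x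
    rw [← Equiv.Perm.coe_pow]
    exact h2
  -- minimal period
  set p := Function.minimalPeriod (⇑T) x0 with hp
  have hperiodic : Function.IsPeriodicPt (⇑T) (orderOf T) x0 := by
    show (⇑T)^[orderOf T] x0 = x0
    rw [← Equiv.Perm.coe_pow, pow_orderOf_eq_one T]; rfl
  have hp_pos : 0 < p :=
    hperiodic.minimalPeriod_pos (orderOf_pos T)
  have hsurj_p : ∀ x : X, ∃ k < p, g k = x := by
    intro x
    obtain ⟨k, hk⟩ := hsurjℕ x
    refine ⟨k % p, Nat.mod_lt _ hp_pos, ?_⟩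
    show (⇑T)^[k % p] x0 = x
    exact (Function.iterate_mod_minimalPeriod_eq (f := ⇑T) (x := x0) (n := k)).trans hk
  have hinjOn : Set.InjOn (fun k => (⇑T)^[k] x0) (Set.Iio p) :=
    Function.iterate_injOn_Iio_minimalPeriod
  -- p = n
  have himg : (Finset.range p).image g = Finset.univ := by
    apply Finset.eq_univ_of_forall
    intro x
    obtain ⟨k, hk, hgk⟩ := hsurj_p x
    exact Finset.mem_image.2 ⟨k, Finset.mem_range.2 hk, hgk⟩
  have hpn : p = n := by
    have h1 : ((Finset.range p).image g).card = p := by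
      rw [Finset.card_image_of_injOn, Finset.card_range]
      intro a ha b hb hab
      exact hinjOn (Finset.mem_range.1 (by exact_mod_cast ha))
        (Finset.mem_range.1 (by exact_mod_cast hb)) hab
    rw [himg, Finset.card_univ] at h1
    omega
  have hinj : ∀ k l : ℕ, k < n → l < n → g k = g l → k = l := by
    intro k l hk hl hkl
    exact hinjOn (by simpa [hpn] using hk) (by simpa [hpn] using hl) hkl
  have hgn : g n = x0 := by
    have := Function.isPeriodicPt_minimalPeriod (⇑T) x0
    rw [← hp, hpn] at this
    exact this
  -- ν commutes with iterates
  have hcommit : ∀ (j : ℕ) (y : X), ν ((⇑T)^[j] y) = (⇑T)^[j] (ν y) := by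
    intro j
    induction j with
    | zero => intro y; simp
    | succ j ih =>
      intro y
      rw [Function.iterate_succ_apply', Function.iterate_succ_apply', hcomm, ih]
  -- find c with ν x0 = g c
  obtain ⟨c, hc_lt, hc⟩ := hsurj_p (ν x0)
  rw [hpn] at hc_lt
  have hc_pos : 0 < c := by
    rcases Nat.eq_zero_or_pos c with h | h
    · exfalso; apply hν_fp x0; rw [← hc, h]; rfl
    · exact h
  have hνg : ∀ j : ℕ, ν (g j) = g (j + c) := by
    intro j
    have h1 : ν (g j) = (⇑T)^[j] (ν x0) := hcommit j x0
    rw [h1, ← hc]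
    simp only [hg]
    exact (Function.iterate_add_apply (⇑T) j c x0).symm
  -- n = 2c
  have hn2c : n = 2 * c := by
    have h2c : g (2 * c) = x0 := by
      have h1 : ν (g c) = g (c + c) := hνg c
      rw [hc, hν_inv x0] at h1
      rw [show 2 * c = c + c by ring, ← h1]
    rcases lt_or_ge (2 * c) n with h | h
    · have := hinj (2 * c) 0 h (by omega) (by simpa [hg] using h2c)
      omega
    · have hlt : 2 * c - n < n := by omega
      have h0 : g (2 * c - n) = x0 := by
        have hgn' : (⇑T)^[n] x0 = x0 := hgn
        have heq : g ((2 * c - n) + n) = g (2 * c - n) := by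
          simp only [hg]
          rw [Function.iterate_add_apply, hgn']
        have hee : (2 * c - n) + n = 2 * c := by omega
        rw [hee] at heq
        rw [← heq, h2c]
      have := hinj (2 * c - n) 0 hlt (by omega) (by simpa [hg] using h0)
      omega
  -- membership flip under ν
  have hPν : ∀ y : X, y ∈ P ↔ ν y ∉ P := by
    intro y
    constructor
    · intro hy hνy
      have : ν y ∈ Pᶜ := hP ▸ Set.mem_image_of_mem ν hy
      exact this hνy
    · intro hνy
      have h1 : ν y ∈ Pᶜ := hνy
      rw [← hP] at h1
      obtain ⟨z, hz, hzy⟩ := h1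
      rwa [← hν_inv.injective hzy]
  have hPν' : ∀ y : X, ν y ∈ P ↔ y ∉ P := by
    intro y
    have := hPν (ν y)
    rw [hν_inv y] at this
    exact this
  -- g (j+1) = T (g j)
  have hgsucc : ∀ j : ℕ, g (j + 1) = T (g j) := by
    intro j; simp only [hg]; rw [Function.iterate_succ_apply']
  -- the transition finset
  set K : Finset ℕ := (Finset.range c).filter (fun k => ¬ (g k ∈ P ↔ g (k + 1) ∈ P)) with hK
  set D : Finset X := Finset.univ.filter (fun x => x ∈ P ∧ T x ∉ P) with hD
  -- bijection K ≃ D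
  have hcard : K.card = D.card := by
    apply Finset.card_bij (fun k _ => if g k ∈ P then g k else ν (g k))
    · -- maps into D
      intro k hk
      simp only [hK, Finset.mem_filter, Finset.mem_range] at hk
      obtain ⟨hkc, htr⟩ := hk
      by_cases h1 : g k ∈ P
      · have h2 : g (k + 1) ∉ P := fun h => htr ⟨fun _ => h, fun _ => h1⟩
        simp only [hD, Finset.mem_filter, Finset.mem_univ, true_and, if_pos h1]
        exact ⟨h1, by rwa [← hgsucc k]⟩
      · have h2 : g (k + 1) ∈ P := by
          by_contra h2
          exact htr ⟨fun h => absurd h h1, fun h => absurd h h2⟩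
        simp only [hD, Finset.mem_filter, Finset.mem_univ, true_and, if_neg h1]
        refine ⟨(hPν' (g k)).mpr h1, ?_⟩
        have : T (ν (g k)) = ν (g (k + 1)) := by rw [← hcomm, hgsucc]
        rw [this]
        exact (hPν (g (k + 1))).mp h2
    · -- injective
      intro k hk l hl heq
      simp only [hK, Finset.mem_filter, Finset.mem_range] at hk hl
      by_cases h1 : g k ∈ P <;> by_cases h2 : g l ∈ P
      · rw [if_pos h1, if_pos h2] at heq
        exact hinj k l (by omega) (by omega) heq
      · rw [if_pos h1, if_neg h2, hνg l] at heq
        exact absurd (hinj k (l + c) (by omega) (by omega) heq) (by omega)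
      · rw [if_neg h1, if_pos h2, hνg k] at heq
        exact absurd (hinj (k + c) l (by omega) (by omega) heq) (by omega)
      · rw [if_neg h1, if_neg h2] at heq
        exact hinj k l (by omega) (by omega) (hν_inv.injective heq)
    · -- surjective
      intro x hx
      simp only [hD, Finset.mem_filter, Finset.mem_univ, true_and] at hx
      obtain ⟨hxP, hTxP⟩ := hx
      obtain ⟨k, hk, hgk⟩ := hsurj_p x
      rw [hpn] at hk
      rcases lt_or_ge k c with hkc | hkc
      · refine ⟨k, ?_, ?_⟩
        · simp only [hK, Finset.mem_filter, Finset.mem_range]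
          refine ⟨hkc, fun hiff => ?_⟩
          have : g (k + 1) ∉ P := by rw [hgsucc, hgk]; exact hTxP
          exact this (hiff.mp (hgk ▸ hxP))
        · rw [if_pos (hgk ▸ hxP : g k ∈ P)]
          exact hgk
      · -- k ≥ c : use k' = k - c
        set k' := k - c with hk'
        have hk'c : k' < c := by omega
        have hνgk' : ν (g k') = x := by
          rw [hνg k', show k' + c = k by omega, hgk]
        have hgk' : g k' ∉ P := by
          intro hmem
          exact ((hPν (g k')).mp hmem) (hνgk' ▸ hxP)
        have hgk'1 : g (k' + 1) ∈ P := by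
          have h1 : ν (g (k' + 1)) = g (k + 1) := by
            rw [hνg (k' + 1)]
            congr 1
            omega
          have h2 : g (k + 1) ∉ P := by rw [hgsucc, hgk]; exact hTxP
          rw [← h1] at h2
          exact (hPν (g (k' + 1))).mpr h2
        refine ⟨k', ?_, ?_⟩
        · simp only [hK, Finset.mem_filter, Finset.mem_range]
          exact ⟨hk'c, fun hiff => hgk' (hiff.mpr hgk'1)⟩
        · rw [if_neg hgk']
          exact hνgk'
  -- identify the set with D
  have hset : Set.ncard {x | x ∈ P ∧ T x ∉ P} = D.card := by
    rw [← Set.ncard_coe_finset]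
    congr 1
    ext x
    simp [hD]
  rw [hset, ← hcard]
  -- parity computation in ZMod 2
  set χ : ℕ → ZMod 2 := fun k => if g k ∈ P then 1 else 0 with hχ
  have htel : ∑ k ∈ Finset.range c, (χ (k + 1) - χ k) = χ c - χ 0 :=
    Finset.sum_range_sub χ c
  have hterm : ∀ k, χ (k + 1) - χ k =
      if ¬ (g k ∈ P ↔ g (k + 1) ∈ P) then (1 : ZMod 2) else 0 := by
    intro k
    by_cases h1 : g k ∈ P <;> by_cases h2 : g (k + 1) ∈ P
    · simp [hχ, h1, h2]
    · simp only [hχ, if_pos h1, if_neg h2]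
      rw [if_pos (show ¬(g k ∈ P ↔ g (k + 1) ∈ P) from fun hi => h2 (hi.mp h1))]
      decide
    · simp only [hχ, if_neg h1, if_pos h2]
      rw [if_pos (show ¬(g k ∈ P ↔ g (k + 1) ∈ P) from fun hi => h1 (hi.mpr h2))]
      decide
    · simp [hχ, h1, h2]
  have hrhs : χ c - χ 0 = 1 := by
    have hgc : g c = ν x0 := hc
    have hgx0 : g 0 = x0 := rfl
    by_cases h0 : x0 ∈ P
    · have : ν x0 ∉ P := (hPν x0).mp h0
      simp only [hχ, hgc, hgx0, if_pos h0, if_neg this]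
      decide
    · have : ν x0 ∈ P := (hPν' x0).mpr h0
      simp [hχ, hgc, hgx0, h0, this]
  have hsum : (K.card : ZMod 2) = 1 := by
    have h1 : (K.card : ZMod 2) = ∑ k ∈ Finset.range c, (χ (k + 1) - χ k) := by
      rw [hK, ← Finset.sum_boole]
      exact Finset.sum_congr rfl (fun k _ => (hterm k).symm)
    rw [h1, htel, hrhs]
  rcases Nat.even_or_odd K.card with he | ho
  · exfalso
    obtain ⟨t, ht⟩ := he
    have h0 : (K.card : ZMod 2) = 0 := by
      rw [ht]
      push_cast
      rw [show ((t : ZMod 2) + t) = 2 * t by ring,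
        show ((2 : ZMod 2)) = 0 by decide, zero_mul]
    rw [h0] at hsum
    exact absurd hsum (by decide)
  · exact ho
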